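/- (Social welfare identity, equation (eq:social_welfare).) Let α ∈ ℝ. Suppose the menu's premia satisfy the premium formula (★): p_θ = p_{θ̲} + ∫₀^{L̄} (1 − g_{θ̲}(F_{θ̲}(l))) r_{θ̲}(l) dl − ∫_{θ̲}^{θ} ∫₀^{L̄} D(s,l) r_s(l) dl ds − ∫₀^{L̄} (1 − g_θ(F_θ(l))) r_θ(l) dl for every θ ∈ Θ. Then the social welfare W_{η,α} := α ∫_Θ U_θ(r_θ, p_θ) q_η(θ) dθ + (1−α) ∫_Θ V_θ(r_θ, p_θ) q(θ) dθ satisfies the identity W_{η,α} = (1−2α) ( p_{θ̲} + ∫₀^{L̄} (1 − g_{θ̲}(F_{θ̲}(l))) r_{θ̲}(l) dl ) − ∫_Θ ∫₀^{L̄} K_θ(l) r_θ(l) dl dθ − (1−α) ∫_Θ ∫₀^{L̄} (1 − g^In(F_θ(l))) q(θ) dl dθ, where K_θ(l) := (1−α)(g^In(F_θ(l)) − g_θ(F_θ(l))) q(θ) + D(θ,l) ((1−α) Q̄(θ) − α Q̄_η(θ)). -/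

import Mathlib

open MeasureTheory

/-- The agent's Yaari dual utility: `U_θ(r, p) = -p - ∫₀^{L̄} (1 - g_θ(F_θ(l))) r(l) dl`. -/
noncomputable def Uag (g F : ℝ → ℝ → ℝ) (Lbar θ : ℝ) (rr : ℝ → ℝ) (pp : ℝ) : ℝ :=
  -pp - ∫ l in (0 : ℝ)..Lbar, (1 - g θ (F θ l)) * rr l

/-- The insurer's Yaari dual utility:
`V_θ(r, p) = p - ∫₀^{L̄} (1 - g^In(F_θ(l))) (1 - r(l)) dl`. -/
noncomputable def Vin (gIn : ℝ → ℝ) (F : ℝ → ℝ → ℝ) (Lbar θ : ℝ) (rr : ℝ → ℝ) (pp : ℝ) : ℝ :=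
  pp - ∫ l in (0 : ℝ)..Lbar, (1 - gIn (F θ l)) * (1 - rr l)

section Helpers
open Set intervalIntegral Topology Filter


lemma indicator_measurable_of_continuousOn {s : Set ℝ} (hs : MeasurableSet s)
    {f : ℝ → ℝ} (hf : ContinuousOn f s) : Measurable (s.indicator f) := by
  have h1 : Measurable fun x : s => f x := hf.restrict.measurable
  have h2 := (MeasurableEmbedding.subtype_coe hs).measurable_extend h1
    (measurable_const : Measurable fun _ : ℝ => (0 : ℝ))
  convert h2 using 1
  funext x
  by_cases hx : x ∈ s
  · rw [Set.indicator_of_mem hx]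
    have := Subtype.val_injective.extend_apply (fun a : s => f a) (fun _ => (0:ℝ)) ⟨x, hx⟩
    simp only [Subtype.coe_mk] at this
    exact this.symm
  · rw [Set.indicator_of_notMem hx, Function.extend_apply']
    rintro ⟨a, rfl⟩; exact hx a.2

lemma integrableOn_of_bdd {f : ℝ → ℝ} {s : Set ℝ} {C : ℝ} (hs : MeasurableSet s)
    (hfin : volume s < ⊤) (hm : AEStronglyMeasurable f (volume.restrict s))
    (hb : ∀ x ∈ s, |f x| ≤ C) : IntegrableOn f s :=
  ⟨hm, HasFiniteIntegral.restrict_of_bounded (C := C) hfin ((ae_restrict_iff' hs).2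
    (Filter.Eventually.of_forall fun x hx => by simpa [Real.norm_eq_abs] using hb x hx))⟩

lemma intervalIntegrable_of_bdd {f : ℝ → ℝ} {a b C : ℝ} (hab : a ≤ b)
    (hm : AEStronglyMeasurable f (volume.restrict (Set.Ioc a b)))
    (hb : ∀ x ∈ Set.Ioc a b, |f x| ≤ C) :
    IntervalIntegrable f volume a b := by
  rw [intervalIntegrable_iff_integrableOn_Ioc_of_le hab]
  exact integrableOn_of_bdd measurableSet_Ioc measure_Ioc_lt_top hm hb

lemma abs_deriv_le_of_lip {f : ℝ → ℝ} {a b x d : ℝ} {C : NNReal}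
    (hab : a < b) (hx : x ∈ Set.Icc a b)
    (hd : HasDerivWithinAt f d (Set.Icc a b) x)
    (hl : LipschitzOnWith C f (Set.Icc a b)) : |d| ≤ C := by
  rw [hasDerivWithinAt_iff_tendsto_slope] at hd
  have hne : (𝓝[Set.Icc a b \ {x}] x).NeBot := by
    rcases lt_or_eq_of_le hx.2 with h | h
    · have h1 : Set.Ioc x b ⊆ Set.Icc a b \ {x} := fun y hy =>
        ⟨⟨hx.1.trans hy.1.le, hy.2⟩, ne_of_gt hy.1⟩
      have h2 : (𝓝[Set.Ioc x b] x).NeBot := by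
        rw [nhdsWithin_Ioc_eq_nhdsGT h]; infer_instance
      exact h2.mono (nhdsWithin_mono _ h1)
    · have hax : a < x := h ▸ hab
      have h1 : Set.Ico a x ⊆ Set.Icc a b \ {x} := fun y hy =>
        ⟨⟨hy.1, hy.2.le.trans hx.2⟩, ne_of_lt hy.2⟩
      have h2 : (𝓝[Set.Ico a x] x).NeBot := by
        rw [nhdsWithin_Ico_eq_nhdsLT hax]; infer_instance
      exact h2.mono (nhdsWithin_mono _ h1)
  have habs : Filter.Tendsto (fun y => |slope f x y|) (𝓝[Set.Icc a b \ {x}] x) (𝓝 |d|) :=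
    hd.abs
  refine le_of_tendsto habs ?_
  filter_upwards [self_mem_nhdsWithin] with y hy
  obtain ⟨hy1, hy2⟩ := hy
  have hne' : y ≠ x := hy2
  have hdist := hl.dist_le_mul y hy1 x hx
  have hyx : (0:ℝ) < |y - x| := abs_pos.2 (sub_ne_zero.2 hne')
  rw [slope_def_field]
  rw [div_eq_mul_inv, abs_mul, abs_inv]
  rw [Real.dist_eq, Real.dist_eq] at hdist
  calc |f y - f x| * |y - x|⁻¹ ≤ (C * |y - x|) * |y - x|⁻¹ :=
        mul_le_mul_of_nonneg_right hdist (inv_nonneg.2 (abs_nonneg _))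
    _ = C := by field_simp

lemma triangle_swap {a b CB Cw : ℝ} (hab : a < b) {B w : ℝ → ℝ}
    (hBm : Measurable B) (hwm : Measurable w)
    (hBb : ∀ x ∈ Set.Ioc a b, |B x| ≤ CB) (hwb : ∀ x ∈ Set.Ioc a b, |w x| ≤ Cw) :
    ∫ θ in a..b, (∫ s in a..θ, B s) * w θ = ∫ s in a..b, B s * ∫ t in s..b, w t := by
  have h0 : a ≤ b := hab.le
  have hCB : 0 ≤ CB := le_trans (abs_nonneg _) (hBb b ⟨hab, le_refl b⟩)
  have hCw : 0 ≤ Cw := le_trans (abs_nonneg _) (hwb b ⟨hab, le_refl b⟩)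
  set T : Set (ℝ × ℝ) := {p : ℝ × ℝ | p.2 ≤ p.1} with hT
  have hTmeas : MeasurableSet T := measurableSet_le measurable_snd measurable_fst
  set f : ℝ × ℝ → ℝ := T.indicator (fun p => B p.2 * w p.1) with hf
  have hfm : Measurable f :=
    ((hBm.comp measurable_snd).mul (hwm.comp measurable_fst)).indicator hTmeas
  set μ := volume.restrict (Set.Ioc a b) with hμ
  have hfi : Integrable f (μ.prod μ) := by
    refine ⟨hfm.aestronglyMeasurable, ?_⟩
    rw [hμ, Measure.prod_restrict]
    refine HasFiniteIntegral.restrict_of_bounded (C := CB * Cw) ?_ ?_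
    · rw [Measure.prod_prod]
      exact ENNReal.mul_lt_top measure_Ioc_lt_top measure_Ioc_lt_top
    · refine (ae_restrict_iff' (measurableSet_Ioc.prod measurableSet_Ioc)).2
        (Filter.Eventually.of_forall ?_)
      rintro ⟨θ, s⟩ ⟨hθ, hs⟩
      rw [Real.norm_eq_abs]
      by_cases hts : (θ, s) ∈ T
      · rw [hf, Set.indicator_of_mem hts, abs_mul]
        exact mul_le_mul (hBb s hs) (hwb θ hθ) (abs_nonneg _) hCB
      · rw [hf, Set.indicator_of_notMem hts, abs_zero]
        exact mul_nonneg hCB hCw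
  have key1 : ∀ θ ∈ Set.Ioc a b,
      (∫ s in a..θ, B s) * w θ = ∫ s, f (θ, s) ∂μ := by
    intro θ hθ
    have h1 : ∀ s, f (θ, s) = Set.indicator (Set.Iic θ) (fun s => B s * w θ) s := by
      intro s
      by_cases hs : s ≤ θ
      · rw [hf, Set.indicator_of_mem (by exact hs : (θ, s) ∈ T),
          Set.indicator_of_mem (by exact hs)]
      · rw [hf, Set.indicator_of_notMem (by exact hs : (θ, s) ∉ T),
          Set.indicator_of_notMem (by exact hs)]
    simp_rw [h1]
    rw [hμ, MeasureTheory.integral_indicator measurableSet_Iic,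
      Measure.restrict_restrict measurableSet_Iic]
    have h2 : Set.Iic θ ∩ Set.Ioc a b = Set.Ioc a θ := by
      ext x
      simp only [Set.mem_inter_iff, Set.mem_Iic, Set.mem_Ioc]
      exact ⟨fun ⟨h1, h2, _⟩ => ⟨h2, h1⟩, fun ⟨h1, h2⟩ => ⟨h2, h1, h2.trans hθ.2⟩⟩
    rw [h2, MeasureTheory.integral_mul_const, intervalIntegral.integral_of_le hθ.1.le]
  have key2 : ∀ s ∈ Set.Ioc a b,
      (∫ θ, f (θ, s) ∂μ) = B s * ∫ t in s..b, w t := by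
    intro s hs
    have h1 : ∀ θ, f (θ, s) = Set.indicator (Set.Ici s) (fun θ => B s * w θ) θ := by
      intro θ
      by_cases hθ : s ≤ θ
      · rw [hf, Set.indicator_of_mem (by exact hθ : (θ, s) ∈ T),
          Set.indicator_of_mem (by exact hθ)]
      · rw [hf, Set.indicator_of_notMem (by exact hθ : (θ, s) ∉ T),
          Set.indicator_of_notMem (by exact hθ)]
    simp_rw [h1]
    rw [hμ, MeasureTheory.integral_indicator measurableSet_Ici,
      Measure.restrict_restrict measurableSet_Ici]
    have h2 : Set.Ici s ∩ Set.Ioc a b = Set.Icc s b := by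
      ext x
      simp only [Set.mem_inter_iff, Set.mem_Ici, Set.mem_Ioc, Set.mem_Icc]
      exact ⟨fun ⟨h1, _, h3⟩ => ⟨h1, h3⟩, fun ⟨h1, h2⟩ => ⟨h1, hs.1.trans_le h1, h2⟩⟩
    rw [h2, integral_Icc_eq_integral_Ioc, MeasureTheory.integral_const_mul,
      intervalIntegral.integral_of_le hs.2]
  calc ∫ θ in a..b, (∫ s in a..θ, B s) * w θ
      = ∫ θ in Set.Ioc a b, (∫ s in a..θ, B s) * w θ := intervalIntegral.integral_of_le h0
    _ = ∫ θ, (∫ s, f (θ, s) ∂μ) ∂μ :=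
        setIntegral_congr_fun measurableSet_Ioc (fun θ hθ => key1 θ hθ)
    _ = ∫ s, (∫ θ, f (θ, s) ∂μ) ∂μ :=
        MeasureTheory.integral_integral_swap (f := fun θ s => f (θ, s)) hfi
    _ = ∫ s in Set.Ioc a b, B s * ∫ t in s..b, w t :=
        setIntegral_congr_fun measurableSet_Ioc (fun s hs => key2 s hs)
    _ = ∫ s in a..b, B s * ∫ t in s..b, w t := (intervalIntegral.integral_of_le h0).symm

lemma meas_pint {h : ℝ × ℝ → ℝ} (hm : Measurable h) (c d : ℝ) :
    Measurable fun t : ℝ => ∫ l in Set.Ioc c d, h (t, l) :=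
  hm.stronglyMeasurable.integral_prod_right'.measurable

end Helpers

/-- **Social welfare identity (eq:social_welfare).** If the premia satisfy the envelope
formula (★), then `W_{η,α} = (1−2α)(p_{θ̲} + ∫ (1−g_{θ̲}(F_{θ̲})) r_{θ̲})
− ∫_Θ ∫₀^{L̄} K_θ(l) r_θ(l) dl dθ − (1−α) ∫_Θ ∫₀^{L̄} (1−g^In(F_θ(l))) q(θ) dl dθ`. -/
theorem social_welfare_identity
    (θlow θhigh Lbar : ℝ) (hθ : θlow < θhigh) (hL : 0 < Lbar)
    (g : ℝ → ℝ → ℝ) (gIn : ℝ → ℝ) (F : ℝ → ℝ → ℝ)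
    (hg_mono : ∀ θ ∈ Set.Icc θlow θhigh, MonotoneOn (g θ) (Set.Icc (0 : ℝ) 1))
    (hg0 : ∀ θ ∈ Set.Icc θlow θhigh, g θ 0 = 0)
    (hg1 : ∀ θ ∈ Set.Icc θlow θhigh, g θ 1 = 1)
    (hg_range : ∀ θ ∈ Set.Icc θlow θhigh, ∀ t ∈ Set.Icc (0 : ℝ) 1,
      g θ t ∈ Set.Icc (0 : ℝ) 1)
    (hgIn_mono : MonotoneOn gIn (Set.Icc (0 : ℝ) 1))
    (hgIn0 : gIn 0 = 0) (hgIn1 : gIn 1 = 1)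
    (hgIn_range : ∀ t ∈ Set.Icc (0 : ℝ) 1, gIn t ∈ Set.Icc (0 : ℝ) 1)
    (hF_range : ∀ θ ∈ Set.Icc θlow θhigh, ∀ l ∈ Set.Icc (0 : ℝ) Lbar,
      F θ l ∈ Set.Icc (0 : ℝ) 1)
    (hgF_meas : Measurable fun x : ℝ × ℝ => g x.1 (F x.1 x.2))
    (hgInF_meas : Measurable fun x : ℝ × ℝ => gIn (F x.1 x.2))
    (r : ℝ → ℝ → ℝ) (p : ℝ → ℝ)
    (hr_meas : Measurable (Function.uncurry r)) (hp_meas : Measurable p)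
    (hr_range : ∀ θ ∈ Set.Icc θlow θhigh, ∀ l ∈ Set.Icc (0 : ℝ) Lbar,
      r θ l ∈ Set.Icc (0 : ℝ) 1)
    (q qη : ℝ → ℝ)
    (hq_cont : ContinuousOn q (Set.Icc θlow θhigh))
    (hqη_cont : ContinuousOn qη (Set.Icc θlow θhigh))
    (hq_nonneg : ∀ θ ∈ Set.Icc θlow θhigh, 0 ≤ q θ)
    (hqη_nonneg : ∀ θ ∈ Set.Icc θlow θhigh, 0 ≤ qη θ)
    (hq_int : (∫ s in θlow..θhigh, q s) = 1)
    (hqη_int : (∫ s in θlow..θhigh, qη s) = 1)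
    (D : ℝ → ℝ → ℝ)
    (hD : ∀ l ∈ Set.Icc (0 : ℝ) Lbar, ∀ s ∈ Set.Icc θlow θhigh,
      HasDerivWithinAt (fun t => g t (F t l)) (D s l) (Set.Icc θlow θhigh) s)
    (hLip : ∃ C : NNReal, ∀ l ∈ Set.Icc (0 : ℝ) Lbar,
      LipschitzOnWith C (fun s => g s (F s l)) (Set.Icc θlow θhigh))
    (hD_meas : Measurable (Function.uncurry D))
    (α : ℝ)
    -- the premium formula (★)
    (hstar : ∀ θ ∈ Set.Icc θlow θhigh,
      p θ = p θlow + (∫ l in (0 : ℝ)..Lbar, (1 - g θlow (F θlow l)) * r θlow l)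
        - (∫ s in θlow..θ, ∫ l in (0 : ℝ)..Lbar, D s l * r s l)
        - ∫ l in (0 : ℝ)..Lbar, (1 - g θ (F θ l)) * r θ l) :
    α * (∫ θ in θlow..θhigh, Uag g F Lbar θ (r θ) (p θ) * qη θ) +
        (1 - α) * (∫ θ in θlow..θhigh, Vin gIn F Lbar θ (r θ) (p θ) * q θ) =
      (1 - 2 * α) *
          (p θlow + ∫ l in (0 : ℝ)..Lbar, (1 - g θlow (F θlow l)) * r θlow l) -
        (∫ θ in θlow..θhigh, ∫ l in (0 : ℝ)..Lbar,
          ((1 - α) * (gIn (F θ l) - g θ (F θ l)) * q θ +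
            D θ l * ((1 - α) * (∫ s in θ..θhigh, q s) -
              α * (∫ s in θ..θhigh, qη s))) * r θ l) -
        (1 - α) * ∫ θ in θlow..θhigh, ∫ l in (0 : ℝ)..Lbar,
          (1 - gIn (F θ l)) * q θ := by
  
  obtain ⟨C0, hC0⟩ := hLip
  have hab : θlow ≤ θhigh := hθ.le
  have hIcc : Set.uIcc θlow θhigh = Set.Icc θlow θhigh := Set.uIcc_of_le hab
  have hL0 : (0:ℝ) ≤ Lbar := hL.le
  have hIoc01 : Set.Ioc (0:ℝ) Lbar ⊆ Set.Icc (0:ℝ) Lbar := Set.Ioc_subset_Icc_self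
  have hIocθ : Set.Ioc θlow θhigh ⊆ Set.Icc θlow θhigh := Set.Ioc_subset_Icc_self
  obtain ⟨Cq, hCq⟩ := (isCompact_Icc (a := θlow) (b := θhigh)).exists_bound_of_continuousOn hq_cont
  obtain ⟨Cqη, hCqη⟩ :=
    (isCompact_Icc (a := θlow) (b := θhigh)).exists_bound_of_continuousOn hqη_cont
  have hCq0 : 0 ≤ Cq := le_trans (norm_nonneg _) (hCq θlow (Set.left_mem_Icc.2 hab))
  have hCqη0 : 0 ≤ Cqη := le_trans (norm_nonneg _) (hCqη θlow (Set.left_mem_Icc.2 hab))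
  set qm : ℝ → ℝ := (Set.Icc θlow θhigh).indicator q with hqm_def
  set qηm : ℝ → ℝ := (Set.Icc θlow θhigh).indicator qη with hqηm_def
  have hqm_m : Measurable qm := indicator_measurable_of_continuousOn measurableSet_Icc hq_cont
  have hqηm_m : Measurable qηm := indicator_measurable_of_continuousOn measurableSet_Icc hqη_cont
  have hqm_eq : ∀ t ∈ Set.Icc θlow θhigh, qm t = q t := fun t ht => Set.indicator_of_mem ht q
  have hqηm_eq : ∀ t ∈ Set.Icc θlow θhigh, qηm t = qη t := fun t ht => Set.indicator_of_mem ht qη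
  have hqm_b : ∀ t, |qm t| ≤ Cq := by
    intro t; by_cases ht : t ∈ Set.Icc θlow θhigh
    · rw [hqm_def, Set.indicator_of_mem ht]
      simpa [Real.norm_eq_abs] using hCq t ht
    · rw [hqm_def, Set.indicator_of_notMem ht, abs_zero]; exact hCq0
  have hqηm_b : ∀ t, |qηm t| ≤ Cqη := by
    intro t; by_cases ht : t ∈ Set.Icc θlow θhigh
    · rw [hqηm_def, Set.indicator_of_mem ht]
      simpa [Real.norm_eq_abs] using hCqη t ht
    · rw [hqηm_def, Set.indicator_of_notMem ht, abs_zero]; exact hCqη0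
  -- joint measurability of the integrands in `l`
  have hmul1 : Measurable fun x : ℝ × ℝ => (1 - g x.1 (F x.1 x.2)) * r x.1 x.2 :=
    (measurable_const.sub hgF_meas).mul hr_meas
  have hmul2 : Measurable fun x : ℝ × ℝ => (1 - gIn (F x.1 x.2)) * r x.1 x.2 :=
    (measurable_const.sub hgInF_meas).mul hr_meas
  have hmul3 : Measurable fun x : ℝ × ℝ => D x.1 x.2 * r x.1 x.2 := hD_meas.mul hr_meas
  have hmul4 : Measurable fun x : ℝ × ℝ => (1 - gIn (F x.1 x.2)) :=
    measurable_const.sub hgInF_meas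
  -- pointwise bounds
  have habs1 : ∀ t ∈ Set.Icc θlow θhigh, ∀ l ∈ Set.Icc (0:ℝ) Lbar,
      |(1 - g t (F t l)) * r t l| ≤ 1 := by
    intro t ht l hl
    obtain ⟨h1, h2⟩ := hg_range t ht _ (hF_range t ht l hl)
    obtain ⟨h3, h4⟩ := hr_range t ht l hl
    rw [abs_mul]
    calc |1 - g t (F t l)| * |r t l| ≤ 1 * 1 := by
          apply mul_le_mul _ _ (abs_nonneg _) zero_le_one
          · rw [abs_le]; constructor <;> linarith
          · rw [abs_le]; constructor <;> linarith
      _ = 1 := by ring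
  have habs2 : ∀ t ∈ Set.Icc θlow θhigh, ∀ l ∈ Set.Icc (0:ℝ) Lbar,
      |(1 - gIn (F t l)) * r t l| ≤ 1 := by
    intro t ht l hl
    obtain ⟨h1, h2⟩ := hgIn_range _ (hF_range t ht l hl)
    obtain ⟨h3, h4⟩ := hr_range t ht l hl
    rw [abs_mul]
    calc |1 - gIn (F t l)| * |r t l| ≤ 1 * 1 := by
          apply mul_le_mul _ _ (abs_nonneg _) zero_le_one
          · rw [abs_le]; constructor <;> linarith
          · rw [abs_le]; constructor <;> linarith
      _ = 1 := by ring
  have habs3 : ∀ t ∈ Set.Icc θlow θhigh, ∀ l ∈ Set.Icc (0:ℝ) Lbar,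
      |1 - gIn (F t l)| ≤ 1 := by
    intro t ht l hl
    obtain ⟨h1, h2⟩ := hgIn_range _ (hF_range t ht l hl)
    rw [abs_le]; constructor <;> linarith
  have habs4 : ∀ t ∈ Set.Icc θlow θhigh, ∀ l ∈ Set.Icc (0:ℝ) Lbar,
      |D t l * r t l| ≤ (C0 : ℝ) := by
    intro t ht l hl
    obtain ⟨h3, h4⟩ := hr_range t ht l hl
    have h5 : |D t l| ≤ (C0 : ℝ) := abs_deriv_le_of_lip hθ ht (hD l hl t ht) (hC0 l hl)
    rw [abs_mul]
    calc |D t l| * |r t l| ≤ (C0 : ℝ) * 1 := by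
          apply mul_le_mul h5 _ (abs_nonneg _) C0.coe_nonneg
          rw [abs_le]; constructor <;> linarith
      _ = (C0 : ℝ) := by ring
  -- interval integrability in `l`, for t in Icc
  have hint1 : ∀ t ∈ Set.Icc θlow θhigh,
      IntervalIntegrable (fun l => (1 - g t (F t l)) * r t l) volume 0 Lbar := fun t ht =>
    intervalIntegrable_of_bdd hL0 (hmul1.comp measurable_prodMk_left).aestronglyMeasurable
      (fun l hl => habs1 t ht l (hIoc01 hl))
  have hint2 : ∀ t ∈ Set.Icc θlow θhigh,
      IntervalIntegrable (fun l => (1 - gIn (F t l)) * r t l) volume 0 Lbar := fun t ht =>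
    intervalIntegrable_of_bdd hL0 (hmul2.comp measurable_prodMk_left).aestronglyMeasurable
      (fun l hl => habs2 t ht l (hIoc01 hl))
  have hint3 : ∀ t ∈ Set.Icc θlow θhigh,
      IntervalIntegrable (fun l => (1 - gIn (F t l))) volume 0 Lbar := fun t ht =>
    intervalIntegrable_of_bdd hL0 (hmul4.comp measurable_prodMk_left).aestronglyMeasurable
      (fun l hl => habs3 t ht l (hIoc01 hl))
  have hint4 : ∀ t ∈ Set.Icc θlow θhigh,
      IntervalIntegrable (fun l => D t l * r t l) volume 0 Lbar := fun t ht =>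
    intervalIntegrable_of_bdd hL0 (hmul3.comp measurable_prodMk_left).aestronglyMeasurable
      (fun l hl => habs4 t ht l (hIoc01 hl))
  -- measurability of the parametrized integrals
  have hAm : Measurable fun t => ∫ l in (0:ℝ)..Lbar, (1 - g t (F t l)) * r t l := by
    have h1 : (fun t => ∫ l in (0:ℝ)..Lbar, (1 - g t (F t l)) * r t l)
        = fun t => ∫ l in Set.Ioc (0:ℝ) Lbar, (1 - g t (F t l)) * r t l :=
      funext fun t => intervalIntegral.integral_of_le hL0
    rw [h1]; exact meas_pint hmul1 0 Lbar
  have hBm : Measurable fun s => ∫ l in (0:ℝ)..Lbar, D s l * r s l := by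
    have h1 : (fun s => ∫ l in (0:ℝ)..Lbar, D s l * r s l)
        = fun s => ∫ l in Set.Ioc (0:ℝ) Lbar, D s l * r s l :=
      funext fun s => intervalIntegral.integral_of_le hL0
    rw [h1]; exact meas_pint hmul3 0 Lbar
  have hEm : Measurable fun t => ∫ l in (0:ℝ)..Lbar, (1 - gIn (F t l)) * r t l := by
    have h1 : (fun t => ∫ l in (0:ℝ)..Lbar, (1 - gIn (F t l)) * r t l)
        = fun t => ∫ l in Set.Ioc (0:ℝ) Lbar, (1 - gIn (F t l)) * r t l :=
      funext fun t => intervalIntegral.integral_of_le hL0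
    rw [h1]; exact meas_pint hmul2 0 Lbar
  have hTm : Measurable fun t => ∫ l in (0:ℝ)..Lbar, (1 - gIn (F t l)) := by
    have h1 : (fun t => ∫ l in (0:ℝ)..Lbar, (1 - gIn (F t l)))
        = fun t => ∫ l in Set.Ioc (0:ℝ) Lbar, (1 - gIn (F t l)) :=
      funext fun t => intervalIntegral.integral_of_le hL0
    rw [h1]; exact meas_pint hmul4 0 Lbar
  -- bounds on the parametrized integrals
  have hAb : ∀ t ∈ Set.Icc θlow θhigh,
      |∫ l in (0:ℝ)..Lbar, (1 - g t (F t l)) * r t l| ≤ Lbar := by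
    intro t ht
    have h1 := intervalIntegral.norm_integral_le_of_norm_le_const (C := 1)
      (f := fun l => (1 - g t (F t l)) * r t l) (a := 0) (b := Lbar) ?_
    · rw [Real.norm_eq_abs] at h1
      calc |∫ l in (0:ℝ)..Lbar, (1 - g t (F t l)) * r t l| ≤ 1 * |Lbar - 0| := h1
        _ = Lbar := by rw [sub_zero, abs_of_nonneg hL0, one_mul]
    · intro x hx
      rw [Set.uIoc_of_le hL0] at hx
      rw [Real.norm_eq_abs]; exact habs1 t ht x (hIoc01 hx)
  have hEb : ∀ t ∈ Set.Icc θlow θhigh,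
      |∫ l in (0:ℝ)..Lbar, (1 - gIn (F t l)) * r t l| ≤ Lbar := by
    intro t ht
    have h1 := intervalIntegral.norm_integral_le_of_norm_le_const (C := 1)
      (f := fun l => (1 - gIn (F t l)) * r t l) (a := 0) (b := Lbar) ?_
    · rw [Real.norm_eq_abs] at h1
      calc |∫ l in (0:ℝ)..Lbar, (1 - gIn (F t l)) * r t l| ≤ 1 * |Lbar - 0| := h1
        _ = Lbar := by rw [sub_zero, abs_of_nonneg hL0, one_mul]
    · intro x hx
      rw [Set.uIoc_of_le hL0] at hx
      rw [Real.norm_eq_abs]; exact habs2 t ht x (hIoc01 hx)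
  have hTb : ∀ t ∈ Set.Icc θlow θhigh,
      |∫ l in (0:ℝ)..Lbar, (1 - gIn (F t l))| ≤ Lbar := by
    intro t ht
    have h1 := intervalIntegral.norm_integral_le_of_norm_le_const (C := 1)
      (f := fun l => (1 - gIn (F t l))) (a := 0) (b := Lbar) ?_
    · rw [Real.norm_eq_abs] at h1
      calc |∫ l in (0:ℝ)..Lbar, (1 - gIn (F t l))| ≤ 1 * |Lbar - 0| := h1
        _ = Lbar := by rw [sub_zero, abs_of_nonneg hL0, one_mul]
    · intro x hx
      rw [Set.uIoc_of_le hL0] at hx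
      rw [Real.norm_eq_abs]; exact habs3 t ht x (hIoc01 hx)
  have hBb : ∀ s ∈ Set.Icc θlow θhigh,
      |∫ l in (0:ℝ)..Lbar, D s l * r s l| ≤ (C0 : ℝ) * Lbar := by
    intro s hs
    have h1 := intervalIntegral.norm_integral_le_of_norm_le_const (C := (C0:ℝ))
      (f := fun l => D s l * r s l) (a := 0) (b := Lbar) ?_
    · rw [Real.norm_eq_abs] at h1
      calc |∫ l in (0:ℝ)..Lbar, D s l * r s l| ≤ (C0:ℝ) * |Lbar - 0| := h1
        _ = (C0:ℝ) * Lbar := by rw [sub_zero, abs_of_nonneg hL0]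
    · intro x hx
      rw [Set.uIoc_of_le hL0] at hx
      rw [Real.norm_eq_abs]; exact habs4 s hs x (hIoc01 hx)
  have hCB0 : (0:ℝ) ≤ (C0:ℝ) * Lbar := mul_nonneg C0.coe_nonneg hL0
  -- bound on the primitive I
  have hIb : ∀ t ∈ Set.Icc θlow θhigh,
      |∫ s in θlow..t, ∫ l in (0:ℝ)..Lbar, D s l * r s l| ≤ (C0:ℝ) * Lbar * (θhigh - θlow) := by
    intro t ht
    have h1 := intervalIntegral.norm_integral_le_of_norm_le_const (C := (C0:ℝ) * Lbar)
      (f := fun s => ∫ l in (0:ℝ)..Lbar, D s l * r s l) (a := θlow) (b := t) ?_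
    · rw [Real.norm_eq_abs] at h1
      calc |∫ s in θlow..t, ∫ l in (0:ℝ)..Lbar, D s l * r s l|
          ≤ (C0:ℝ) * Lbar * |t - θlow| := h1
        _ ≤ (C0:ℝ) * Lbar * (θhigh - θlow) := by
            apply mul_le_mul_of_nonneg_left _ hCB0
            rw [abs_of_nonneg (by linarith [ht.1])]
            linarith [ht.2]
    · intro x hx
      rw [Set.uIoc_of_le ht.1] at hx
      rw [Real.norm_eq_abs]; exact hBb x ⟨hx.1.le, hx.2.trans ht.2⟩
  -- bounds on tail integrals of q, qη
  have hQb : ∀ t ∈ Set.Icc θlow θhigh, |∫ s in t..θhigh, q s| ≤ Cq * (θhigh - θlow) := by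
    intro t ht
    have h1 := intervalIntegral.norm_integral_le_of_norm_le_const (C := Cq)
      (f := q) (a := t) (b := θhigh) ?_
    · rw [Real.norm_eq_abs] at h1
      calc |∫ s in t..θhigh, q s| ≤ Cq * |θhigh - t| := h1
        _ ≤ Cq * (θhigh - θlow) := by
            apply mul_le_mul_of_nonneg_left _ hCq0
            rw [abs_of_nonneg (by linarith [ht.2])]
            linarith [ht.1]
    · intro x hx
      rw [Set.uIoc_of_le ht.2] at hx
      exact hCq x ⟨ht.1.trans hx.1.le, hx.2⟩
  have hQηb : ∀ t ∈ Set.Icc θlow θhigh, |∫ s in t..θhigh, qη s| ≤ Cqη * (θhigh - θlow) := by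
    intro t ht
    have h1 := intervalIntegral.norm_integral_le_of_norm_le_const (C := Cqη)
      (f := qη) (a := t) (b := θhigh) ?_
    · rw [Real.norm_eq_abs] at h1
      calc |∫ s in t..θhigh, qη s| ≤ Cqη * |θhigh - t| := h1
        _ ≤ Cqη * (θhigh - θlow) := by
            apply mul_le_mul_of_nonneg_left _ hCqη0
            rw [abs_of_nonneg (by linarith [ht.2])]
            linarith [ht.1]
    · intro x hx
      rw [Set.uIoc_of_le ht.2] at hx
      exact hCqη x ⟨ht.1.trans hx.1.le, hx.2⟩
  -- interval integrability of q, qη on [θlow, θhigh]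
  have hq_ii : IntervalIntegrable q volume θlow θhigh :=
    ContinuousOn.intervalIntegrable (by rw [hIcc]; exact hq_cont)
  have hqη_ii : IntervalIntegrable qη volume θlow θhigh :=
    ContinuousOn.intervalIntegrable (by rw [hIcc]; exact hqη_cont)
  -- integrability on Icc for primitives
  have hB_ion : IntegrableOn (fun s => ∫ l in (0:ℝ)..Lbar, D s l * r s l)
      (Set.Icc θlow θhigh) :=
    integrableOn_of_bdd measurableSet_Icc measure_Icc_lt_top hBm.aestronglyMeasurable hBb
  have hq_ion : IntegrableOn q (Set.Icc θlow θhigh) :=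
    integrableOn_of_bdd measurableSet_Icc measure_Icc_lt_top
      (hq_cont.aestronglyMeasurable measurableSet_Icc)
      (fun x hx => by rw [← Real.norm_eq_abs]; exact hCq x hx)
  have hqη_ion : IntegrableOn qη (Set.Icc θlow θhigh) :=
    integrableOn_of_bdd measurableSet_Icc measure_Icc_lt_top
      (hqη_cont.aestronglyMeasurable measurableSet_Icc)
      (fun x hx => by rw [← Real.norm_eq_abs]; exact hCqη x hx)
  -- continuity of I
  have hI_cont : ContinuousOn
      (fun t => ∫ s in θlow..t, ∫ l in (0:ℝ)..Lbar, D s l * r s l)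
      (Set.Icc θlow θhigh) := by
    refine (intervalIntegral.continuousOn_primitive hB_ion).congr ?_
    intro t ht
    exact intervalIntegral.integral_of_le ht.1
  -- continuity of tail integrals of q and qη
  have hQ_cont : ContinuousOn (fun t => ∫ s in t..θhigh, q s) (Set.Icc θlow θhigh) := by
    refine ((continuousOn_const (c := ∫ s in θlow..θhigh, q s)).sub
      (intervalIntegral.continuousOn_primitive hq_ion)).congr ?_
    · intro t ht
      have h2 : IntervalIntegrable q volume θlow t := hq_ii.mono_set
        (by rw [Set.uIcc_of_le ht.1, hIcc]; exact Set.Icc_subset_Icc le_rfl ht.2)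
      have h3 : IntervalIntegrable q volume t θhigh := hq_ii.mono_set
        (by rw [Set.uIcc_of_le ht.2, hIcc]; exact Set.Icc_subset_Icc ht.1 le_rfl)
      have h4 := intervalIntegral.integral_add_adjacent_intervals h2 h3
      have h5 : (∫ s in Set.Ioc θlow t, q s) = ∫ s in θlow..t, q s :=
        (intervalIntegral.integral_of_le ht.1).symm
      simp only [Pi.sub_apply]
      rw [h5]
      linarith [h4]
  have hQη_cont : ContinuousOn (fun t => ∫ s in t..θhigh, qη s) (Set.Icc θlow θhigh) := by
    refine ((continuousOn_const (c := ∫ s in θlow..θhigh, qη s)).sub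
      (intervalIntegral.continuousOn_primitive hqη_ion)).congr ?_
    · intro t ht
      have h2 : IntervalIntegrable qη volume θlow t := hqη_ii.mono_set
        (by rw [Set.uIcc_of_le ht.1, hIcc]; exact Set.Icc_subset_Icc le_rfl ht.2)
      have h3 : IntervalIntegrable qη volume t θhigh := hqη_ii.mono_set
        (by rw [Set.uIcc_of_le ht.2, hIcc]; exact Set.Icc_subset_Icc ht.1 le_rfl)
      have h4 := intervalIntegral.integral_add_adjacent_intervals h2 h3
      have h5 : (∫ s in Set.Ioc θlow t, qη s) = ∫ s in θlow..t, qη s :=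
        (intervalIntegral.integral_of_le ht.1).symm
      simp only [Pi.sub_apply]
      rw [h5]
      linarith [h4]
  -- outer interval integrability over [θlow, θhigh]
  have hii_qm : IntervalIntegrable qm volume θlow θhigh :=
    intervalIntegrable_of_bdd hab hqm_m.aestronglyMeasurable (fun x _ => hqm_b x)
  have hii_qηm : IntervalIntegrable qηm volume θlow θhigh :=
    intervalIntegrable_of_bdd hab hqηm_m.aestronglyMeasurable (fun x _ => hqηm_b x)
  have hii_Iqm : IntervalIntegrable
      (fun t => (∫ s in θlow..t, ∫ l in (0:ℝ)..Lbar, D s l * r s l) * qm t)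
      volume θlow θhigh := by
    refine intervalIntegrable_of_bdd (C := (C0:ℝ) * Lbar * (θhigh - θlow) * Cq) hab
      (((hI_cont.mono hIocθ).aestronglyMeasurable measurableSet_Ioc).mul
        hqm_m.aestronglyMeasurable) ?_
    intro x hx
    rw [abs_mul]
    exact mul_le_mul (hIb x (hIocθ hx)) (hqm_b x) (abs_nonneg _)
      (mul_nonneg hCB0 (by linarith))
  have hii_Iqηm : IntervalIntegrable
      (fun t => (∫ s in θlow..t, ∫ l in (0:ℝ)..Lbar, D s l * r s l) * qηm t)
      volume θlow θhigh := by
    refine intervalIntegrable_of_bdd (C := (C0:ℝ) * Lbar * (θhigh - θlow) * Cqη) hab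
      (((hI_cont.mono hIocθ).aestronglyMeasurable measurableSet_Ioc).mul
        hqηm_m.aestronglyMeasurable) ?_
    intro x hx
    rw [abs_mul]
    exact mul_le_mul (hIb x (hIocθ hx)) (hqηm_b x) (abs_nonneg _)
      (mul_nonneg hCB0 (by linarith))
  have hii_Aqm : IntervalIntegrable
      (fun t => (∫ l in (0:ℝ)..Lbar, (1 - g t (F t l)) * r t l) * qm t) volume θlow θhigh := by
    refine intervalIntegrable_of_bdd (C := Lbar * Cq) hab
      ((hAm.mul hqm_m).aestronglyMeasurable) ?_
    intro x hx
    rw [abs_mul]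
    exact mul_le_mul (hAb x (hIocθ hx)) (hqm_b x) (abs_nonneg _) hL0
  have hii_Eqm : IntervalIntegrable
      (fun t => (∫ l in (0:ℝ)..Lbar, (1 - gIn (F t l)) * r t l) * qm t) volume θlow θhigh := by
    refine intervalIntegrable_of_bdd (C := Lbar * Cq) hab
      ((hEm.mul hqm_m).aestronglyMeasurable) ?_
    intro x hx
    rw [abs_mul]
    exact mul_le_mul (hEb x (hIocθ hx)) (hqm_b x) (abs_nonneg _) hL0
  have hii_Tqm : IntervalIntegrable
      (fun t => (∫ l in (0:ℝ)..Lbar, (1 - gIn (F t l))) * qm t) volume θlow θhigh := by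
    refine intervalIntegrable_of_bdd (C := Lbar * Cq) hab
      ((hTm.mul hqm_m).aestronglyMeasurable) ?_
    intro x hx
    rw [abs_mul]
    exact mul_le_mul (hTb x (hIocθ hx)) (hqm_b x) (abs_nonneg _) hL0
  have hii_BQ : IntervalIntegrable
      (fun t => (∫ l in (0:ℝ)..Lbar, D t l * r t l) * (∫ s in t..θhigh, q s))
      volume θlow θhigh := by
    refine intervalIntegrable_of_bdd (C := (C0:ℝ) * Lbar * (Cq * (θhigh - θlow))) hab
      (hBm.aestronglyMeasurable.mul
        ((hQ_cont.mono hIocθ).aestronglyMeasurable measurableSet_Ioc)) ?_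
    intro x hx
    rw [abs_mul]
    exact mul_le_mul (hBb x (hIocθ hx)) (hQb x (hIocθ hx)) (abs_nonneg _) hCB0
  have hii_BQη : IntervalIntegrable
      (fun t => (∫ l in (0:ℝ)..Lbar, D t l * r t l) * (∫ s in t..θhigh, qη s))
      volume θlow θhigh := by
    refine intervalIntegrable_of_bdd (C := (C0:ℝ) * Lbar * (Cqη * (θhigh - θlow))) hab
      (hBm.aestronglyMeasurable.mul
        ((hQη_cont.mono hIocθ).aestronglyMeasurable measurableSet_Ioc)) ?_
    intro x hx
    rw [abs_mul]
    exact mul_le_mul (hBb x (hIocθ hx)) (hQηb x (hIocθ hx)) (abs_nonneg _) hCB0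
  -- total masses of qm, qηm
  have hqm_one : (∫ t in θlow..θhigh, qm t) = 1 := by
    rw [intervalIntegral.integral_congr (g := q) (by rw [hIcc]; exact fun t ht => hqm_eq t ht)]
    exact hq_int
  have hqηm_one : (∫ t in θlow..θhigh, qηm t) = 1 := by
    rw [intervalIntegral.integral_congr (g := qη) (by rw [hIcc]; exact fun t ht => hqηm_eq t ht)]
    exact hqη_int
  -- rewrite the agent-side integral
  have hU_congr : (∫ t in θlow..θhigh, Uag g F Lbar t (r t) (p t) * qη t)
      = ∫ t in θlow..θhigh,
          (-(p θlow + ∫ l in (0:ℝ)..Lbar, (1 - g θlow (F θlow l)) * r θlow l)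
            + (∫ s in θlow..t, ∫ l in (0:ℝ)..Lbar, D s l * r s l)) * qηm t := by
    apply intervalIntegral.integral_congr
    rw [hIcc]
    intro t ht
    dsimp only
    have h1 : Uag g F Lbar t (r t) (p t)
        = -(p t) - ∫ l in (0:ℝ)..Lbar, (1 - g t (F t l)) * r t l := rfl
    rw [h1, hstar t ht, hqηm_eq t ht]
    ring
  have hU_split : (∫ t in θlow..θhigh,
        (-(p θlow + ∫ l in (0:ℝ)..Lbar, (1 - g θlow (F θlow l)) * r θlow l)
          + (∫ s in θlow..t, ∫ l in (0:ℝ)..Lbar, D s l * r s l)) * qηm t)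
      = -(p θlow + ∫ l in (0:ℝ)..Lbar, (1 - g θlow (F θlow l)) * r θlow l)
        + ∫ t in θlow..θhigh,
            (∫ s in θlow..t, ∫ l in (0:ℝ)..Lbar, D s l * r s l) * qηm t := by
    have h1 : ∀ t : ℝ,
        (-(p θlow + ∫ l in (0:ℝ)..Lbar, (1 - g θlow (F θlow l)) * r θlow l)
          + (∫ s in θlow..t, ∫ l in (0:ℝ)..Lbar, D s l * r s l)) * qηm t
        = (-(p θlow + ∫ l in (0:ℝ)..Lbar, (1 - g θlow (F θlow l)) * r θlow l)) * qηm t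
          + (∫ s in θlow..t, ∫ l in (0:ℝ)..Lbar, D s l * r s l) * qηm t := fun t => by ring
    simp only [h1]
    rw [intervalIntegral.integral_add (hii_qηm.const_mul _) hii_Iqηm,
      intervalIntegral.integral_const_mul, hqηm_one, mul_one]
  -- rewrite the insurer-side integral
  have hV_congr : (∫ t in θlow..θhigh, Vin gIn F Lbar t (r t) (p t) * q t)
      = ∫ t in θlow..θhigh,
          ((p θlow + ∫ l in (0:ℝ)..Lbar, (1 - g θlow (F θlow l)) * r θlow l) * qm t
            - (∫ s in θlow..t, ∫ l in (0:ℝ)..Lbar, D s l * r s l) * qm t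
            - (∫ l in (0:ℝ)..Lbar, (1 - g t (F t l)) * r t l) * qm t
            - (∫ l in (0:ℝ)..Lbar, (1 - gIn (F t l))) * qm t
            + (∫ l in (0:ℝ)..Lbar, (1 - gIn (F t l)) * r t l) * qm t) := by
    apply intervalIntegral.integral_congr
    rw [hIcc]
    intro t ht
    dsimp only
    have h1 : Vin gIn F Lbar t (r t) (p t)
        = p t - ∫ l in (0:ℝ)..Lbar, (1 - gIn (F t l)) * (1 - r t l) := rfl
    have h2 : (∫ l in (0:ℝ)..Lbar, (1 - gIn (F t l)) * (1 - r t l))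
        = (∫ l in (0:ℝ)..Lbar, (1 - gIn (F t l)))
          - ∫ l in (0:ℝ)..Lbar, (1 - gIn (F t l)) * r t l := by
      have h3 : ∀ l : ℝ, (1 - gIn (F t l)) * (1 - r t l)
          = (1 - gIn (F t l)) - (1 - gIn (F t l)) * r t l := fun l => by ring
      simp only [h3]
      exact intervalIntegral.integral_sub (hint3 t ht) (hint2 t ht)
    rw [h1, h2, hstar t ht, ← hqm_eq t ht]
    ring
  have hV_split : (∫ t in θlow..θhigh,
        ((p θlow + ∫ l in (0:ℝ)..Lbar, (1 - g θlow (F θlow l)) * r θlow l) * qm t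
          - (∫ s in θlow..t, ∫ l in (0:ℝ)..Lbar, D s l * r s l) * qm t
          - (∫ l in (0:ℝ)..Lbar, (1 - g t (F t l)) * r t l) * qm t
          - (∫ l in (0:ℝ)..Lbar, (1 - gIn (F t l))) * qm t
          + (∫ l in (0:ℝ)..Lbar, (1 - gIn (F t l)) * r t l) * qm t))
      = (p θlow + ∫ l in (0:ℝ)..Lbar, (1 - g θlow (F θlow l)) * r θlow l)
        - (∫ t in θlow..θhigh,
            (∫ s in θlow..t, ∫ l in (0:ℝ)..Lbar, D s l * r s l) * qm t)
        - (∫ t in θlow..θhigh, (∫ l in (0:ℝ)..Lbar, (1 - g t (F t l)) * r t l) * qm t)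
        - (∫ t in θlow..θhigh, (∫ l in (0:ℝ)..Lbar, (1 - gIn (F t l))) * qm t)
        + (∫ t in θlow..θhigh, (∫ l in (0:ℝ)..Lbar, (1 - gIn (F t l)) * r t l) * qm t) := by
    rw [intervalIntegral.integral_add
        ((((hii_qm.const_mul _).sub hii_Iqm).sub hii_Aqm).sub hii_Tqm) hii_Eqm,
      intervalIntegral.integral_sub (((hii_qm.const_mul _).sub hii_Iqm).sub hii_Aqm) hii_Tqm,
      intervalIntegral.integral_sub ((hii_qm.const_mul _).sub hii_Iqm) hii_Aqm,
      intervalIntegral.integral_sub (hii_qm.const_mul _) hii_Iqm,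
      intervalIntegral.integral_const_mul, hqm_one, mul_one]
  -- rewrite the middle term on the RHS
  have hMid : (∫ t in θlow..θhigh, ∫ l in (0 : ℝ)..Lbar,
        ((1 - α) * (gIn (F t l) - g t (F t l)) * q t +
          D t l * ((1 - α) * (∫ s in t..θhigh, q s) -
            α * (∫ s in t..θhigh, qη s))) * r t l)
      = (1 - α) * (∫ t in θlow..θhigh,
            (∫ l in (0:ℝ)..Lbar, (1 - g t (F t l)) * r t l) * qm t)
        - (1 - α) * (∫ t in θlow..θhigh,
            (∫ l in (0:ℝ)..Lbar, (1 - gIn (F t l)) * r t l) * qm t)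
        + ((1 - α) * (∫ t in θlow..θhigh,
              (∫ l in (0:ℝ)..Lbar, D t l * r t l) * (∫ s in t..θhigh, q s))
          - α * (∫ t in θlow..θhigh,
              (∫ l in (0:ℝ)..Lbar, D t l * r t l) * (∫ s in t..θhigh, qη s))) := by
    have hcongr : (∫ t in θlow..θhigh, ∫ l in (0 : ℝ)..Lbar,
          ((1 - α) * (gIn (F t l) - g t (F t l)) * q t +
            D t l * ((1 - α) * (∫ s in t..θhigh, q s) -
              α * (∫ s in t..θhigh, qη s))) * r t l)
        = ∫ t in θlow..θhigh,
            ((1 - α) * ((∫ l in (0:ℝ)..Lbar, (1 - g t (F t l)) * r t l) * qm t)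
              - (1 - α) * ((∫ l in (0:ℝ)..Lbar, (1 - gIn (F t l)) * r t l) * qm t)
              + ((1 - α) * ((∫ l in (0:ℝ)..Lbar, D t l * r t l) * (∫ s in t..θhigh, q s))
                - α * ((∫ l in (0:ℝ)..Lbar, D t l * r t l) * (∫ s in t..θhigh, qη s)))) := by
      apply intervalIntegral.integral_congr
      rw [hIcc]
      intro t ht
      dsimp only
      have h3 : ∀ l : ℝ,
          ((1 - α) * (gIn (F t l) - g t (F t l)) * q t +
            D t l * ((1 - α) * (∫ s in t..θhigh, q s) -
              α * (∫ s in t..θhigh, qη s))) * r t l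
          = ((1 - α) * q t) * ((1 - g t (F t l)) * r t l)
            - ((1 - α) * q t) * ((1 - gIn (F t l)) * r t l)
            + ((1 - α) * (∫ s in t..θhigh, q s) - α * (∫ s in t..θhigh, qη s))
              * (D t l * r t l) := fun l => by ring
      simp only [h3]
      rw [intervalIntegral.integral_add
          (((hint1 t ht).const_mul _).sub ((hint2 t ht).const_mul _))
          ((hint4 t ht).const_mul _),
        intervalIntegral.integral_sub ((hint1 t ht).const_mul _) ((hint2 t ht).const_mul _),
        intervalIntegral.integral_const_mul, intervalIntegral.integral_const_mul,
        intervalIntegral.integral_const_mul, ← hqm_eq t ht]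
      ring
    rw [hcongr,
      intervalIntegral.integral_add
        ((hii_Aqm.const_mul _).sub (hii_Eqm.const_mul _))
        ((hii_BQ.const_mul _).sub (hii_BQη.const_mul _)),
      intervalIntegral.integral_sub (hii_Aqm.const_mul _) (hii_Eqm.const_mul _),
      intervalIntegral.integral_sub (hii_BQ.const_mul _) (hii_BQη.const_mul _),
      intervalIntegral.integral_const_mul, intervalIntegral.integral_const_mul,
      intervalIntegral.integral_const_mul, intervalIntegral.integral_const_mul]
  -- rewrite the last term on the RHS
  have hLast : (∫ t in θlow..θhigh, ∫ l in (0 : ℝ)..Lbar, (1 - gIn (F t l)) * q t)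
      = ∫ t in θlow..θhigh, (∫ l in (0:ℝ)..Lbar, (1 - gIn (F t l))) * qm t := by
    apply intervalIntegral.integral_congr
    rw [hIcc]
    intro t ht
    dsimp only
    rw [intervalIntegral.integral_mul_const, hqm_eq t ht]
  -- Fubini on the triangle
  have hfub_q : (∫ t in θlow..θhigh,
        (∫ s in θlow..t, ∫ l in (0:ℝ)..Lbar, D s l * r s l) * qm t)
      = ∫ t in θlow..θhigh,
          (∫ l in (0:ℝ)..Lbar, D t l * r t l) * (∫ s in t..θhigh, q s) := by
    have h1 := triangle_swap hθ hBm hqm_m (fun x hx => hBb x (hIocθ hx)) (fun x _ => hqm_b x)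
    calc (∫ t in θlow..θhigh, (∫ s in θlow..t, ∫ l in (0:ℝ)..Lbar, D s l * r s l) * qm t)
        = ∫ s in θlow..θhigh,
            (∫ l in (0:ℝ)..Lbar, D s l * r s l) * (∫ u in s..θhigh, qm u) := h1
      _ = ∫ t in θlow..θhigh,
            (∫ l in (0:ℝ)..Lbar, D t l * r t l) * (∫ s in t..θhigh, q s) := by
          apply intervalIntegral.integral_congr
          rw [hIcc]
          intro t ht
          dsimp only
          congr 1
          apply intervalIntegral.integral_congr
          intro u hu
          rw [Set.uIcc_of_le ht.2] at hu
          exact hqm_eq u ⟨ht.1.trans hu.1, hu.2⟩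
  have hfub_qη : (∫ t in θlow..θhigh,
        (∫ s in θlow..t, ∫ l in (0:ℝ)..Lbar, D s l * r s l) * qηm t)
      = ∫ t in θlow..θhigh,
          (∫ l in (0:ℝ)..Lbar, D t l * r t l) * (∫ s in t..θhigh, qη s) := by
    have h1 := triangle_swap hθ hBm hqηm_m (fun x hx => hBb x (hIocθ hx)) (fun x _ => hqηm_b x)
    calc (∫ t in θlow..θhigh, (∫ s in θlow..t, ∫ l in (0:ℝ)..Lbar, D s l * r s l) * qηm t)
        = ∫ s in θlow..θhigh,
            (∫ l in (0:ℝ)..Lbar, D s l * r s l) * (∫ u in s..θhigh, qηm u) := h1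
      _ = ∫ t in θlow..θhigh,
            (∫ l in (0:ℝ)..Lbar, D t l * r t l) * (∫ s in t..θhigh, qη s) := by
          apply intervalIntegral.integral_congr
          rw [hIcc]
          intro t ht
          dsimp only
          congr 1
          apply intervalIntegral.integral_congr
          intro u hu
          rw [Set.uIcc_of_le ht.2] at hu
          exact hqηm_eq u ⟨ht.1.trans hu.1, hu.2⟩
  -- assemble
  rw [hU_congr, hU_split, hfub_qη, hV_congr, hV_split, hfub_q, hMid, hLast]
  ring
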